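/- Let N1, N2 > 0, ρ1 ∈ (0,N1), ρ2 ∈ (0,N2), ν1 > 0, and for k1 ∈ [0,N1], k2 ∈ [0,N2] define D1(k1,k2) = (1/ν1)·( 1/(N1+N2−ρ1−ρ2) + ( (1−ρ1/(N1+N2))·(1/(N1+k2)) / (1−ρ1/(N1+k2))² − (1/(N1+N2)) / (1−ρ1/(N1+k2)) ) / ( (1−ρ1/(N1+N2))/(1−ρ1/(N1+k2)) + (1−ρ2/(N1+N2))/(1−ρ2/(N2+k1)) − 1 ) ). Then D1(k1,k2) is a strictly decreasing function of k2 on [0,N2] for each fixed k1. -/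

import Mathlib

noncomputable def D1coc (N1 N2 ρ1 ρ2 ν1 k1 k2 : ℝ) : ℝ :=
  (1 / ν1) * (1 / (N1 + N2 - ρ1 - ρ2) +
    ((1 - ρ1 / (N1 + N2)) * (1 / (N1 + k2)) / (1 - ρ1 / (N1 + k2)) ^ 2
      - (1 / (N1 + N2)) / (1 - ρ1 / (N1 + k2)))
    / ((1 - ρ1 / (N1 + N2)) / (1 - ρ1 / (N1 + k2))
        + (1 - ρ2 / (N1 + N2)) / (1 - ρ2 / (N2 + k1)) - 1))

lemma key_mono (a c u v : ℝ) (ha : 0 < a) (hc : 0 ≤ c) (hv : 1 ≤ a * v)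
    (huv : v < u) :
    (a * v ^ 2 - v) / (a * v + c) < (a * u ^ 2 - u) / (a * u + c) := by
  have hv0 : 0 < v := by nlinarith
  have hu0 : 0 < u := lt_trans hv0 huv
  have hu : 1 < a * u := by nlinarith
  have hdv : 0 < a * v + c := by nlinarith
  have hdu : 0 < a * u + c := by nlinarith
  rw [div_lt_div_iff₀ hdv hdu]
  nlinarith [mul_pos (sub_pos.mpr huv) (mul_pos (mul_pos (mul_pos ha ha) hv0) hu0),
    mul_nonneg hc (mul_pos (sub_pos.mpr huv) (show (0:ℝ) < a * (u + v) - 1 by nlinarith)).le]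

theorem stmt_1 (N1 N2 ρ1 ρ2 ν1 : ℝ) (hN1 : 0 < N1) (hN2 : 0 < N2)
    (hρ1 : 0 < ρ1) (hρ1' : ρ1 < N1) (hρ2 : 0 < ρ2) (hρ2' : ρ2 < N2)
    (hν1 : 0 < ν1) :
    ∀ k1 : ℝ, 0 ≤ k1 → k1 ≤ N1 →
      StrictAntiOn (fun k2 => D1coc N1 N2 ρ1 ρ2 ν1 k1 k2) (Set.Icc 0 N2) := by
  intro k1 hk10 hk1N x hx y hy hxy
  obtain ⟨hx0, hxN⟩ := hx
  obtain ⟨hy0, hyN⟩ := hy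
  have hNN : (0:ℝ) < N1 + N2 := by linarith
  set a : ℝ := 1 - ρ1 / (N1 + N2) with ha_def
  have ha : 0 < a := by
    have : ρ1 / (N1 + N2) < 1 := (div_lt_one hNN).mpr (by linarith)
    simp only [ha_def]; linarith
  set B : ℝ := (1 - ρ2 / (N1 + N2)) / (1 - ρ2 / (N2 + k1)) with hB_def
  set c : ℝ := B - 1 with hc_def
  have hNk1 : (0:ℝ) < N2 + k1 := by linarith
  have hwB : 0 < 1 - ρ2 / (N2 + k1) := by
    have : ρ2 / (N2 + k1) < 1 := (div_lt_one hNk1).mpr (by linarith)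
    linarith
  have hc : 0 ≤ c := by
    have h1 : ρ2 / (N1 + N2) ≤ ρ2 / (N2 + k1) :=
      div_le_div_of_nonneg_left hρ2.le hNk1 (by linarith)
    have hB1 : 1 ≤ B := by
      rw [hB_def, le_div_iff₀ hwB]; linarith
    simp only [hc_def]; linarith
  -- generic facts about w(k) = 1 - ρ1/(N1+k) for k ∈ [0, N2]
  have hwpos : ∀ k : ℝ, 0 ≤ k → 0 < 1 - ρ1 / (N1 + k) := by
    intro k hk
    have hp : (0:ℝ) < N1 + k := by linarith
    have : ρ1 / (N1 + k) < 1 := (div_lt_one hp).mpr (by linarith)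
    linarith
  have hwle : ∀ k : ℝ, 0 ≤ k → k ≤ N2 → 1 - ρ1 / (N1 + k) ≤ a := by
    intro k hk0 hk
    have hp : (0:ℝ) < N1 + k := by linarith
    have : ρ1 / (N1 + N2) ≤ ρ1 / (N1 + k) :=
      div_le_div_of_nonneg_left hρ1.le hp (by linarith)
    simp only [ha_def]; linarith
  -- rewrite D1coc in the substituted form
  have hrw : ∀ k : ℝ, 0 ≤ k → D1coc N1 N2 ρ1 ρ2 ν1 k1 k =
      (1 / ν1) * (1 / (N1 + N2 - ρ1 - ρ2) +
        (1 / ρ1) * ((a * (1 / (1 - ρ1 / (N1 + k))) ^ 2 - 1 / (1 - ρ1 / (N1 + k)))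
          / (a * (1 / (1 - ρ1 / (N1 + k))) + c))) := by
    intro k hk
    have hp : (0:ℝ) < N1 + k := by linarith
    have hw := hwpos k hk
    unfold D1coc
    have hden : (1 - ρ1 / (N1 + N2)) / (1 - ρ1 / (N1 + k))
        + (1 - ρ2 / (N1 + N2)) / (1 - ρ2 / (N2 + k1)) - 1
        = a * (1 / (1 - ρ1 / (N1 + k))) + c := by
      rw [mul_one_div, hc_def, hB_def, ha_def]; ring
    have hnum : (1 - ρ1 / (N1 + N2)) * (1 / (N1 + k)) / (1 - ρ1 / (N1 + k)) ^ 2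
        - (1 / (N1 + N2)) / (1 - ρ1 / (N1 + k))
        = (1 / ρ1) * (a * (1 / (1 - ρ1 / (N1 + k))) ^ 2 - 1 / (1 - ρ1 / (N1 + k))) := by
      have hp' : (N1 + k) ≠ 0 := ne_of_gt hp
      have hw' : (1 - ρ1 / (N1 + k)) ≠ 0 := ne_of_gt hw
      have hN' : (N1 + N2) ≠ 0 := ne_of_gt hNN
      have hρ' : ρ1 ≠ 0 := ne_of_gt hρ1
      have hx1 : (1:ℝ) / (N1 + k) = (1 - (1 - ρ1 / (N1 + k))) / ρ1 := by
        field_simp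
        ring
      have hs : (1:ℝ) / (N1 + N2) = (1 - a) / ρ1 := by
        rw [ha_def]; field_simp
        ring
      have key : ∀ w : ℝ, w ≠ 0 →
          a * ((1 - w) / ρ1) / w ^ 2 - (1 - a) / ρ1 / w
            = (1 / ρ1) * (a * (1 / w) ^ 2 - 1 / w) := by
        intro w hw0
        field_simp
        ring
      rw [hx1, hs, key _ hw']
    rw [hden, hnum, mul_div_assoc]
  have hwx := hwpos x hx0
  have hwy := hwpos y hy0
  have hwyle := hwle y hy0 hyN
  have hwxy : 1 - ρ1 / (N1 + x) < 1 - ρ1 / (N1 + y) := by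
    have : ρ1 / (N1 + y) < ρ1 / (N1 + x) :=
      div_lt_div_of_pos_left hρ1 (by linarith) (by linarith)
    linarith
  have hvu : 1 / (1 - ρ1 / (N1 + y)) < 1 / (1 - ρ1 / (N1 + x)) :=
    one_div_lt_one_div_of_lt hwx hwxy
  have hav : 1 ≤ a * (1 / (1 - ρ1 / (N1 + y))) := by
    rw [mul_one_div, le_div_iff₀ hwy]; linarith
  have hkey := key_mono a c (1 / (1 - ρ1 / (N1 + x))) (1 / (1 - ρ1 / (N1 + y)))
    ha hc hav hvu
  simp only [hrw x hx0, hrw y hy0]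
  have hν : 0 < 1 / ν1 := by positivity
  have hρ : 0 < 1 / ρ1 := by positivity
  have h2 := mul_lt_mul_of_pos_left hkey hρ
  exact mul_lt_mul_of_pos_left (by linarith) hν
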